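/- arXiv:1407.2472 — 3 statements merged into one kernel-verified Lean document; each statement's English description precedes it below -/
import Mathlib

section
/- Let α > 0, n ≥ 1 and K ≥ 1. Then there exists a constant β_0 = β_0(n,α,K) such that for every axis-parallel cube Q ⊂ ℝ^n with center c_Q and side length ℓ(Q) satisfying ℓ(Q) ≤ K·|c_Q|^{1−α} and |c_Q|^{min(α,1)} ≥ 6√n·K, one has μ_{−α}(3Q) ≤ β_0·μ_{−α}(Q), where 3Q is the cube with the same center and side length 3ℓ(Q). -/
set_option maxHeartbeats 1000000


open MeasureTheory ENNReal

/-- The measure `dμ_{-α}(x) = e^{-|x|^α} dx` on `ℝⁿ`. -/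
noncomputable def muNegAlpha (n : ℕ) (α : ℝ) : Measure (EuclideanSpace ℝ (Fin n)) :=
  volume.withDensity fun x => ENNReal.ofReal (Real.exp (-(‖x‖ ^ α)))

/-- The axis-parallel cube with center `c` and side length `ℓ`. -/
def cubeC (n : ℕ) (c : EuclideanSpace ℝ (Fin n)) (ℓ : ℝ) :
    Set (EuclideanSpace ℝ (Fin n)) :=
  {x | ∀ i, |x i - c i| ≤ ℓ / 2}

lemma cubeC_eq (n : ℕ) (c : EuclideanSpace ℝ (Fin n)) (ℓ : ℝ) :
    cubeC n c ℓ = ((MeasurableEquiv.toLp 2 (Fin n → ℝ)).symm) ⁻¹'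
      (Set.univ.pi fun i => Set.Icc (c i - ℓ/2) (c i + ℓ/2)) := by
  ext x
  simp only [cubeC, Set.mem_setOf_eq, Set.mem_preimage, Set.mem_pi, Set.mem_univ, true_implies,
    Set.mem_Icc, MeasurableEquiv.toLp_symm_apply, abs_sub_le_iff]
  constructor
  · intro h i; have := h i; constructor <;> linarith [this.1, this.2]
  · intro h i; have := h i; constructor <;> linarith [this.1, this.2]

lemma cubeC_measurable (n : ℕ) (c : EuclideanSpace ℝ (Fin n)) (ℓ : ℝ) :
    MeasurableSet (cubeC n c ℓ) := by
  rw [cubeC_eq]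
  exact ((MeasurableEquiv.toLp 2 (Fin n → ℝ)).symm).measurable
    (MeasurableSet.univ_pi fun i => measurableSet_Icc)

lemma volume_cubeC (n : ℕ) (c : EuclideanSpace ℝ (Fin n)) (ℓ : ℝ) :
    volume (cubeC n c ℓ) = ENNReal.ofReal ℓ ^ n := by
  rw [cubeC_eq, (EuclideanSpace.volume_preserving_symm_measurableEquiv_toLp (Fin n)).measure_preimage
    (MeasurableSet.univ_pi fun i => measurableSet_Icc).nullMeasurableSet, volume_pi_pi]
  have : ∀ i : Fin n, c i + ℓ/2 - (c i - ℓ/2) = ℓ := fun i => by ring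
  simp [Real.volume_Icc, this]

lemma mvt_rpow (α : ℝ) {b a : ℝ} (hb : 0 < b) (hba : b ≤ a) :
    ∃ ξ, b ≤ ξ ∧ ξ ≤ a ∧ a ^ α - b ^ α = α * ξ ^ (α - 1) * (a - b) := by
  rcases eq_or_lt_of_le hba with h | h
  · exact ⟨b, le_refl _, hba, by rw [← h]; ring⟩
  · obtain ⟨ξ, hξ, heq⟩ := exists_hasDerivAt_eq_slope (fun x => x ^ α)
      (fun x => α * x ^ (α - 1)) h
      (fun x hx => (Real.continuousAt_rpow_const x α (Or.inl (lt_of_lt_of_le hb hx.1).ne')).continuousWithinAt)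
      (fun x hx => Real.hasDerivAt_rpow_const (Or.inl (lt_of_lt_of_le hb hx.1.le).ne'))
    refine ⟨ξ, hξ.1.le, hξ.2.le, ?_⟩
    have hab : a - b ≠ 0 := sub_ne_zero.mpr h.ne'
    field_simp at heq
    linarith [heq]

lemma osc_bound (α : ℝ) (hα : 0 < α) {R δ S : ℝ} (hR : 1 < R) (hδ : 0 ≤ δ)
    (hδR : δ ≤ R/4) (h2δ : 2*δ ≤ 3*S*R^(1-α)) :
    (R+δ)^α - (R-δ)^α ≤ 3*α*((3/4:ℝ)^(α-1) + (5/4:ℝ)^(α-1))*S := by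
  have hRpos : (0:ℝ) < R := by linarith
  have hbpos : (0:ℝ) < R - δ := by linarith
  obtain ⟨ξ, hξ1, hξ2, heq⟩ := mvt_rpow α hbpos (by linarith : R - δ ≤ R + δ)
  have hξpos : 0 < ξ := lt_of_lt_of_le hbpos hξ1
  set D := (3/4:ℝ)^(α-1) + (5/4:ℝ)^(α-1) with hD
  have hDpos : 0 < D := by positivity
  have hξb : ξ ^ (α-1) ≤ D * R ^ (α-1) := by
    rcases le_or_gt 1 α with h1 | h1
    · have h5 : ξ ^ (α-1) ≤ ((5/4)*R) ^ (α-1) :=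
        Real.rpow_le_rpow hξpos.le (by linarith) (by linarith)
      rw [Real.mul_rpow (by norm_num) hRpos.le] at h5
      have h3 : (0:ℝ) ≤ (3/4:ℝ)^(α-1) * R^(α-1) := by positivity
      rw [hD]; nlinarith
    · have h5 : ξ ^ (α-1) ≤ ((3/4)*R) ^ (α-1) :=
        Real.rpow_le_rpow_of_nonpos (by positivity) (by linarith) (by linarith)
      rw [Real.mul_rpow (by norm_num) hRpos.le] at h5
      have h3 : (0:ℝ) ≤ (5/4:ℝ)^(α-1) * R^(α-1) := by positivity
      rw [hD]; nlinarith
  have hpow : R^(α-1) * R^(1-α) = 1 := by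
    rw [← Real.rpow_add hRpos]; norm_num
  calc (R+δ)^α - (R-δ)^α = α * ξ^(α-1) * ((R+δ)-(R-δ)) := heq
    _ = α * ξ^(α-1) * (2*δ) := by ring_nf
    _ ≤ α * (D * R^(α-1)) * (3*S*R^(1-α)) := by
        apply mul_le_mul (mul_le_mul_of_nonneg_left hξb hα.le) h2δ (by positivity) (by positivity)
    _ = 3*α*D*S * (R^(α-1)*R^(1-α)) := by ring
    _ = 3*α*D*S := by rw [hpow, mul_one]

/-- admissible cubes are `(3,β₀)`-doubling for `μ_{-α}`.  For all
`α > 0`, `n ≥ 1`, `K ≥ 1` there is `β₀ = β₀(n,α,K)` such that every cube `Q` with center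
`c_Q`, side length `ℓ(Q) ≤ K|c_Q|^{1-α}` and `|c_Q|^{min(α,1)} ≥ 6√n·K` satisfies
`μ_{-α}(3Q) ≤ β₀ μ_{-α}(Q)`. -/
theorem statement17 (α : ℝ) (hα : 0 < α) (n : ℕ) (hn : 1 ≤ n) (K : ℝ) (hK : 1 ≤ K) :
    ∃ β₀ : ℝ, 0 < β₀ ∧ ∀ (c : EuclideanSpace ℝ (Fin n)) (ℓ : ℝ), 0 < ℓ →
      ℓ ≤ K * ‖c‖ ^ (1 - α) → 6 * Real.sqrt n * K ≤ ‖c‖ ^ min α 1 →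
      muNegAlpha n α (cubeC n c (3 * ℓ))
        ≤ ENNReal.ofReal β₀ * muNegAlpha n α (cubeC n c ℓ) := by
  set sn := Real.sqrt n with hsn
  have hsn1 : 1 ≤ sn := by
    rw [hsn, show (1:ℝ) = Real.sqrt 1 by simp]
    exact Real.sqrt_le_sqrt (by exact_mod_cast hn)
  set D := (3/4:ℝ)^(α-1) + (5/4:ℝ)^(α-1) with hD
  have hDpos : 0 < D := by positivity
  set C := 3*α*D*(sn*K) with hC
  refine ⟨3^n * Real.exp C, by positivity, ?_⟩
  intro c ℓ hℓ hℓK hcK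
  set R := ‖c‖ with hRdef
  have hR6 : (6:ℝ) ≤ R ^ min α 1 := le_trans (by nlinarith) hcK
  have hm : 0 < min α 1 := lt_min hα one_pos
  have hR1 : 1 < R := by
    by_contra h; push_neg at h
    have : R ^ min α 1 ≤ 1 := Real.rpow_le_one (norm_nonneg c) h hm.le
    linarith
  have hRpos : (0:ℝ) < R := by linarith
  set δ := (3/2) * sn * ℓ with hδdef
  have hδ0 : 0 ≤ δ := by rw [hδdef]; nlinarith
  have hrp : (0:ℝ) ≤ R^(1-α) := Real.rpow_nonneg hRpos.le _
  have hδle : δ ≤ (3/2)*(sn*K*R^(1-α)) := by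
    rw [hδdef]; nlinarith
  have hδR : δ ≤ R/4 := by
    rcases le_or_gt α 1 with h1 | h1
    · have hmin : min α 1 = α := min_eq_left h1
      rw [hmin] at hcK
      have hid : R^(1-α) * R^α = R := by
        rw [← Real.rpow_add hRpos]; norm_num
      have key : 6*(sn*K*R^(1-α)) ≤ R := by
        calc 6*(sn*K*R^(1-α)) = R^(1-α) * (6*sn*K) := by ring
          _ ≤ R^(1-α) * R^α := mul_le_mul_of_nonneg_left hcK hrp
          _ = R := hid
      linarith
    · have hmin : min α 1 = 1 := min_eq_right h1.le
      rw [hmin, Real.rpow_one] at hcK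
      have hR1a : R^(1-α) ≤ 1 := Real.rpow_le_one_of_one_le_of_nonpos hR1.le (by linarith)
      have hsnK : (0:ℝ) ≤ sn*K := by nlinarith
      have : (3/2)*(sn*K*R^(1-α)) ≤ (3/2)*(sn*K) := by nlinarith
      linarith [hcK]
  have h2δ : 2*δ ≤ 3*(sn*K)*R^(1-α) := by
    rw [hδdef]; nlinarith
  have hosc : (R+δ)^α - (R-δ)^α ≤ C := by
    rw [hC]
    calc (R+δ)^α - (R-δ)^α ≤ 3*α*D*(sn*K) := by
          rw [hD]; exact osc_bound α hα hR1 hδ0 hδR h2δ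
      _ = 3*α*D*(sn*K) := rfl
  -- geometry
  have hgeo : ∀ x ∈ cubeC n c (3*ℓ), R - δ ≤ ‖x‖ ∧ ‖x‖ ≤ R + δ := by
    intro x hx
    have hdist : ‖x - c‖ ≤ δ := by
      have h1 : ‖x - c‖ = Real.sqrt (∑ i, (x i - c i)^2) := by
        rw [EuclideanSpace.norm_eq]
        congr 1
        refine Finset.sum_congr rfl fun i _ => ?_
        simp [Real.norm_eq_abs, sq_abs]
      have h2 : ∑ i, (x i - c i)^2 ≤ n * ((3*ℓ)/2)^2 := by
        calc ∑ i, (x i - c i)^2 ≤ ∑ _i : Fin n, ((3*ℓ)/2)^2 :=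
              Finset.sum_le_sum fun i _ => by
                have := hx i
                nlinarith [abs_nonneg (x i - c i), sq_abs (x i - c i)]
          _ = n * ((3*ℓ)/2)^2 := by
              rw [Finset.sum_const, Finset.card_univ, Fintype.card_fin, nsmul_eq_mul]
      rw [h1]
      calc Real.sqrt (∑ i, (x i - c i)^2) ≤ Real.sqrt (n * ((3*ℓ)/2)^2) :=
            Real.sqrt_le_sqrt h2
        _ = sn * ((3*ℓ)/2) := by
            rw [Real.sqrt_mul (by positivity) , Real.sqrt_sq (by linarith)]
        _ = δ := by rw [hδdef]; ring
    have habs := abs_le.mp (le_trans (abs_norm_sub_norm_le x c) hdist)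
    exact ⟨by linarith [habs.1], by linarith [habs.2]⟩
  have hRδpos : (0:ℝ) ≤ R - δ := by linarith
  have hQsub : cubeC n c ℓ ⊆ cubeC n c (3*ℓ) := fun x hx i => le_trans (hx i) (by linarith)
  have hfm : Measurable fun x : EuclideanSpace ℝ (Fin n) =>
      ENNReal.ofReal (Real.exp (-(‖x‖^α))) := by fun_prop
  have hμ3 : muNegAlpha n α (cubeC n c (3*ℓ))
      ≤ ENNReal.ofReal (Real.exp (-((R-δ)^α))) * ENNReal.ofReal (3*ℓ) ^ n := by
    rw [muNegAlpha, withDensity_apply _ (cubeC_measurable n c (3*ℓ))]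
    calc ∫⁻ x in cubeC n c (3*ℓ), ENNReal.ofReal (Real.exp (-(‖x‖^α)))
        ≤ ∫⁻ _x in cubeC n c (3*ℓ), ENNReal.ofReal (Real.exp (-((R-δ)^α))) := by
          refine setLIntegral_mono measurable_const fun x hx => ?_
          apply ENNReal.ofReal_le_ofReal
          apply Real.exp_le_exp.mpr
          have : (R-δ)^α ≤ ‖x‖^α := Real.rpow_le_rpow hRδpos (hgeo x hx).1 hα.le
          linarith
      _ = ENNReal.ofReal (Real.exp (-((R-δ)^α))) * volume (cubeC n c (3*ℓ)) :=
          setLIntegral_const _ _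
      _ = ENNReal.ofReal (Real.exp (-((R-δ)^α))) * ENNReal.ofReal (3*ℓ) ^ n := by
          rw [volume_cubeC]
  have hμ1 : ENNReal.ofReal (Real.exp (-((R+δ)^α))) * ENNReal.ofReal ℓ ^ n
      ≤ muNegAlpha n α (cubeC n c ℓ) := by
    rw [muNegAlpha, withDensity_apply _ (cubeC_measurable n c ℓ)]
    calc ENNReal.ofReal (Real.exp (-((R+δ)^α))) * ENNReal.ofReal ℓ ^ n
        = ∫⁻ _x in cubeC n c ℓ, ENNReal.ofReal (Real.exp (-((R+δ)^α))) := by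
          rw [setLIntegral_const, volume_cubeC]
      _ ≤ ∫⁻ x in cubeC n c ℓ, ENNReal.ofReal (Real.exp (-(‖x‖^α))) := by
          refine setLIntegral_mono hfm fun x hx => ?_
          apply ENNReal.ofReal_le_ofReal
          apply Real.exp_le_exp.mpr
          have : ‖x‖^α ≤ (R+δ)^α :=
            Real.rpow_le_rpow (norm_nonneg x) (hgeo x (hQsub hx)).2 hα.le
          linarith
  have key : ENNReal.ofReal (Real.exp (-((R-δ)^α))) * ENNReal.ofReal (3*ℓ) ^ n
      ≤ ENNReal.ofReal (3^n * Real.exp C) *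
        (ENNReal.ofReal (Real.exp (-((R+δ)^α))) * ENNReal.ofReal ℓ ^ n) := by
    rw [← ENNReal.ofReal_pow (by linarith : (0:ℝ) ≤ 3*ℓ),
        ← ENNReal.ofReal_pow (by linarith : (0:ℝ) ≤ ℓ),
        ← ENNReal.ofReal_mul (Real.exp_nonneg _),
        ← ENNReal.ofReal_mul (Real.exp_nonneg _),
        ← ENNReal.ofReal_mul (by positivity)]
    apply ENNReal.ofReal_le_ofReal
    have hexp : Real.exp (-((R-δ)^α)) ≤ Real.exp C * Real.exp (-((R+δ)^α)) := by
      rw [← Real.exp_add]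
      apply Real.exp_le_exp.mpr
      linarith
    calc Real.exp (-((R-δ)^α)) * (3*ℓ)^n
        = (Real.exp (-((R-δ)^α))) * (3^n * ℓ^n) := by rw [mul_pow]
      _ ≤ (Real.exp C * Real.exp (-((R+δ)^α))) * (3^n * ℓ^n) := by
          apply mul_le_mul_of_nonneg_right hexp (by positivity)
      _ = 3^n * Real.exp C * (Real.exp (-((R+δ)^α)) * ℓ^n) := by ring
  calc muNegAlpha n α (cubeC n c (3*ℓ))
      ≤ ENNReal.ofReal (Real.exp (-((R-δ)^α))) * ENNReal.ofReal (3*ℓ) ^ n := hμ3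
    _ ≤ ENNReal.ofReal (3^n * Real.exp C) *
        (ENNReal.ofReal (Real.exp (-((R+δ)^α))) * ENNReal.ofReal ℓ ^ n) := key
    _ ≤ ENNReal.ofReal (3^n * Real.exp C) * muNegAlpha n α (cubeC n c ℓ) :=
        mul_le_mul_right hμ1 _
end

section
/- Let (Ω,Σ,μ) be a σ-finite measure space, Σ_a and Σ_b atomic σ-subalgebras of Σ with atom families Π_a, Π_b, let A_0 be either an element of Π_a or the empty set, and let 0 < c < 1. Assume that for every A ∈ Π_a∖{A_0}: Σ_{B∈R_A} |R_B|·μ(A∩B)²/(μ(A)μ(B)) ≤ c. Then for every finite subfamily 𝒜 ⊆ Π_a∖{A_0}, writing R_𝒜 = ⋃_{A∈𝒜} ⋃_{B∈R_A} B, one has μ(⋃_{A∈𝒜} A) ≤ c·μ(R_𝒜). -/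
open MeasureTheory ENNReal

lemma ennreal_cs {ι : Type*} (f g : ι → ℝ≥0∞) :
    (∑' i, f i * g i) ^ 2 ≤ (∑' i, f i ^ 2) * (∑' i, g i ^ 2) := by
  letI : MeasurableSpace ι := ⊤
  haveI : MeasurableSingletonClass ι := ⟨fun _ => trivial⟩
  have hconj : Real.HolderConjugate 2 2 := Real.HolderConjugate.two_two
  have h := ENNReal.lintegral_mul_le_Lp_mul_Lq (Measure.count (α := ι)) hconj
    (f := f) (g := g) measurable_from_top.aemeasurable measurable_from_top.aemeasurable
  simp only [Pi.mul_apply, MeasureTheory.lintegral_count] at h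
  have hr2 : ∀ x : ℝ≥0∞, x ^ (2:ℝ) = x ^ 2 := fun x => by
    rw [show (2:ℝ) = ((2:ℕ):ℝ) by norm_num, ENNReal.rpow_natCast]
  have h2 : ∑' i, f i * g i ≤ (∑' i, f i ^ 2) ^ (1 / 2 : ℝ) * (∑' i, g i ^ 2) ^ (1 / 2 : ℝ) := by
    simpa only [hr2] using h
  calc (∑' i, f i * g i) ^ 2
      ≤ ((∑' i, f i ^ 2) ^ (1 / 2 : ℝ) * (∑' i, g i ^ 2) ^ (1 / 2 : ℝ)) ^ 2 :=
        pow_le_pow_left₀ zero_le h2 2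
    _ = (∑' i, f i ^ 2) * (∑' i, g i ^ 2) := by
        rw [mul_pow, ← ENNReal.rpow_natCast ((∑' i, f i ^ 2) ^ (1/2:ℝ)),
          ← ENNReal.rpow_natCast ((∑' i, g i ^ 2) ^ (1/2:ℝ)),
          ← ENNReal.rpow_mul, ← ENNReal.rpow_mul]
        norm_num

lemma ennreal_sq_sum_le {ι : Type*} (t : Finset ι) (f : ι → ℝ≥0∞) :
    (∑ i ∈ t, f i) ^ 2 ≤ (t.card : ℝ≥0∞) * ∑ i ∈ t, f i ^ 2 := by
  have h := ennreal_cs (ι := {x // x ∈ t}) (fun i => f i.1) (fun _ => 1)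
  simp only [mul_one, one_pow] at h
  rw [Finset.tsum_subtype t f, Finset.tsum_subtype t (fun i => f i ^ 2),
    Finset.tsum_subtype t (fun _ => (1:ℝ≥0∞))] at h
  simpa [Finset.sum_const, mul_comm] using h

/-- An atomic σ-subalgebra of the ambient σ-algebra, encoded by the countable
measurable partition of `Ω` into atoms of positive finite measure generating it. -/
structure AtomicPartition {Ω : Type*} {m : MeasurableSpace Ω} (μ : Measure Ω) where
  ι : Type
  countable : Countable ι
  atom : ι → Set Ω
  measurableSet : ∀ i, MeasurableSet (atom i)
  disjoint : Pairwise (Function.onFun Disjoint atom)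
  cover : ⋃ i, atom i = Set.univ
  pos : ∀ i, 0 < μ (atom i)
  lt_top : ∀ i, μ (atom i) < ∞

namespace AtomicPartition

variable {Ω : Type*} {m : MeasurableSpace Ω} {μ : Measure Ω}

/-- The σ-algebra generated by the atoms. -/
def sigma (P : AtomicPartition μ) : MeasurableSpace Ω :=
  MeasurableSpace.generateFrom (Set.range P.atom)

/-- The conditional expectation onto the atomic σ-algebra:
`E f = ∑_A (μ(A)⁻¹ ∫_A f dμ) · 1_A`. -/
noncomputable def condExp (P : AtomicPartition μ) {E : Type*} [NormedAddCommGroup E]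
    [NormedSpace ℝ E] (f : Ω → E) : Ω → E := fun x =>
  ∑' i, Set.indicator (P.atom i)
    (fun _ => (μ (P.atom i)).toReal⁻¹ • ∫ y in P.atom i, f y ∂μ) x

end AtomicPartition

/-- `|R_B|`: the number (in `ℝ≥0∞`) of atoms of `Pa` meeting the atom `Pb.atom j`
in positive measure. -/
noncomputable def rCard {Ω : Type*} {m : MeasurableSpace Ω} (μ : Measure Ω)
    (Pa Pb : AtomicPartition μ) (j : Pb.ι) : ℝ≥0∞ :=
  ∑' _i : {i : Pa.ι // 0 < μ (Pa.atom i ∩ Pb.atom j)}, 1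

/-- `∑_{B ∈ R_A} |R_B| · μ(A∩B)² / (μ(A)μ(B))` for the atom `A = Pa.atom i`
(terms with `μ(A∩B) = 0` vanish, so we may sum over all atoms of `Pb`). -/
noncomputable def atomSum {Ω : Type*} {m : MeasurableSpace Ω} (μ : Measure Ω)
    (Pa Pb : AtomicPartition μ) (i : Pa.ι) : ℝ≥0∞ :=
  ∑' j : Pb.ι, rCard μ Pa Pb j * μ (Pa.atom i ∩ Pb.atom j) ^ 2 /
    (μ (Pa.atom i) * μ (Pb.atom j))

/-- `Σ_a ∩ Σ_b = {Ω, ∅}` modulo `μ`-null sets. -/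
def TrivialIntersection {Ω : Type*} {m : MeasurableSpace Ω} (μ : Measure Ω)
    (ma mb : MeasurableSpace Ω) : Prop :=
  ∀ S T : Set Ω, MeasurableSet[ma] S → MeasurableSet[mb] T →
    μ (symmDiff S T) = 0 → μ S = 0 ∨ μ Sᶜ = 0

/-- `(Σ_a, Σ_b)` is an admissible covering of `(Ω, Σ, μ)` with distinguished atoms
`A0, B0` (which are actual atoms when `μ` is finite, and `∅`, i.e. `none`, when
`μ(Ω) = ∞`). -/
structure IsAdmissibleCovering {Ω : Type*} {m : MeasurableSpace Ω} (μ : Measure Ω)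
    (Pa Pb : AtomicPartition μ) (A0 : Option Pa.ι) (B0 : Option Pb.ι) : Prop where
  trivial_inter : TrivialIntersection μ Pa.sigma Pb.sigma
  infinite_case : μ Set.univ = ∞ → A0 = none ∧ B0 = none
  finite_case : μ Set.univ < ∞ → A0.isSome ∧ B0.isSome
  small : min (⨆ i ∈ {i : Pa.ι | some i ≠ A0}, atomSum μ Pa Pb i)
      (⨆ j ∈ {j : Pb.ι | some j ≠ B0}, atomSum μ Pb Pa j) < 1

/-- concentration at the boundary.  If
`∑_{B ∈ R_A} |R_B| μ(A∩B)²/(μ(A)μ(B)) ≤ c` for every atom `A ≠ A₀` of `Σ_a`, then for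
every finite family `𝒜 ⊆ Π_a ∖ {A₀}` one has `μ(⋃𝒜) ≤ c · μ(R_𝒜)`, where `R_𝒜` is the
union of all atoms of `Σ_b` meeting some atom of `𝒜` in positive measure. -/
theorem statement18 {Ω : Type*} [MeasurableSpace Ω] (μ : Measure Ω) [SigmaFinite μ]
    (Pa Pb : AtomicPartition μ) (A0 : Option Pa.ι) (c : ℝ) (hc0 : 0 < c) (hc1 : c < 1)
    (H : ∀ i : Pa.ι, some i ≠ A0 → atomSum μ Pa Pb i ≤ ENNReal.ofReal c) :
    ∀ 𝒜 : Finset Pa.ι, (∀ i ∈ 𝒜, some i ≠ A0) →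
      μ (⋃ i ∈ 𝒜, Pa.atom i)
        ≤ ENNReal.ofReal c *
          μ (⋃ i ∈ 𝒜, ⋃ j ∈ {j : Pb.ι | 0 < μ (Pa.atom i ∩ Pb.atom j)}, Pb.atom j) := by

  intro 𝒜 h𝒜
  classical
  haveI := Pa.countable
  haveI := Pb.countable
  -- basic facts
  have hμE : μ (⋃ i ∈ 𝒜, Pa.atom i) = ∑ i ∈ 𝒜, μ (Pa.atom i) :=
    measure_biUnion_finset (fun x _ y _ hxy => Pa.disjoint hxy)
      (fun i _ => Pa.measurableSet i)
  have hElt : μ (⋃ i ∈ 𝒜, Pa.atom i) ≠ ∞ := by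
    rw [hμE]
    exact (ENNReal.sum_lt_top.2 fun i _ => Pa.lt_top i).ne
  by_cases hE0 : μ (⋃ i ∈ 𝒜, Pa.atom i) = 0
  · rw [hE0]; exact zero_le
  -- decomposition of each A-atom along the B-partition
  have hdecomp : ∀ i, μ (Pa.atom i) = ∑' j, μ (Pa.atom i ∩ Pb.atom j) := by
    intro i
    have hAi : Pa.atom i = ⋃ j, Pa.atom i ∩ Pb.atom j := by
      rw [← Set.inter_iUnion, Pb.cover, Set.inter_univ]
    conv_lhs => rw [hAi]
    exact measure_iUnion
      (fun x y hxy => ((Pb.disjoint hxy).mono Set.inter_subset_right Set.inter_subset_right))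
      (fun j => (Pa.measurableSet i).inter (Pb.measurableSet j))
  set S : Pb.ι → ℝ≥0∞ := fun j => ∑ i ∈ 𝒜, μ (Pa.atom i ∩ Pb.atom j) with hSdef
  have hES : μ (⋃ i ∈ 𝒜, Pa.atom i) = ∑' j, S j := by
    rw [hμE, hSdef]
    rw [Summable.tsum_finsetSum (fun i _ => ENNReal.summable)]
    exact Finset.sum_congr rfl fun i _ => hdecomp i
  -- the union of relevant B-atoms
  set R : Set Pb.ι := {j | 0 < S j} with hRdef
  have hSzero : ∀ j ∉ R, S j = 0 := fun j hj => by
    simpa [hRdef, pos_iff_ne_zero] using hj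
  have hset : (⋃ i ∈ 𝒜, ⋃ j ∈ {j : Pb.ι | 0 < μ (Pa.atom i ∩ Pb.atom j)}, Pb.atom j)
      = ⋃ j ∈ R, Pb.atom j := by
    ext x
    simp only [Set.mem_iUnion, Set.mem_setOf_eq, exists_prop, hRdef]
    constructor
    · rintro ⟨i, hi, j, hj, hx⟩
      refine ⟨j, lt_of_lt_of_le hj ?_, hx⟩
      exact Finset.single_le_sum (f := fun i => μ (Pa.atom i ∩ Pb.atom j)) (fun i _ => zero_le) hi
    · rintro ⟨j, hj, hx⟩
      rw [hSdef, pos_iff_ne_zero, Ne, Finset.sum_eq_zero_iff] at hj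
      push_neg at hj
      obtain ⟨i, hi, hne⟩ := hj
      exact ⟨i, hi, j, pos_iff_ne_zero.2 hne, hx⟩
  have hμR : μ (⋃ j ∈ R, Pb.atom j) = ∑' j : R, μ (Pb.atom j) :=
    measure_biUnion (Set.to_countable _)
      (fun x _ y _ hxy => Pb.disjoint hxy) (fun j _ => Pb.measurableSet j)
  -- Cauchy–Schwarz setup
  have hB0 : ∀ j, μ (Pb.atom j) ^ (1/2 : ℝ) ≠ 0 :=
    fun j => (ENNReal.rpow_pos (Pb.pos j) (Pb.lt_top j).ne).ne'
  have hBt : ∀ j, μ (Pb.atom j) ^ (1/2 : ℝ) ≠ ∞ :=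
    fun j => ENNReal.rpow_ne_top_of_nonneg (by norm_num) (Pb.lt_top j).ne
  have hsqrt : ∀ j, (μ (Pb.atom j) ^ (1/2 : ℝ)) ^ 2 = μ (Pb.atom j) := by
    intro j
    rw [← ENNReal.rpow_natCast (μ (Pb.atom j) ^ (1/2:ℝ)), ← ENNReal.rpow_mul]
    norm_num
  set w : Pb.ι → ℝ≥0∞ := fun j => Set.indicator R (fun j => μ (Pb.atom j) ^ (1/2 : ℝ)) j with hwdef
  set v : Pb.ι → ℝ≥0∞ := fun j => S j / μ (Pb.atom j) ^ (1/2 : ℝ) with hvdef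
  have hwv : ∀ j, w j * v j = S j := by
    intro j
    by_cases hj : j ∈ R
    · rw [hwdef, hvdef]
      simp only [Set.indicator_of_mem hj]
      exact ENNReal.mul_div_cancel (hB0 j) (hBt j)
    · rw [hwdef, hvdef]
      simp [Set.indicator_of_notMem hj, hSzero j hj]
  have hw2 : ∑' j, w j ^ 2 = ∑' j : R, μ (Pb.atom j) := by
    rw [tsum_subtype R (fun j => μ (Pb.atom j))]
    refine tsum_congr fun j => ?_
    by_cases hj : j ∈ R
    · simp only [hwdef, Set.indicator_of_mem hj, hsqrt j]
    · simp [hwdef, Set.indicator_of_notMem hj]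
  -- inner Cauchy–Schwarz
  have hinner : ∀ j, S j ^ 2 ≤ rCard μ Pa Pb j * ∑ i ∈ 𝒜, μ (Pa.atom i ∩ Pb.atom j) ^ 2 := by
    intro j
    set p : Pa.ι → Prop := fun i => 0 < μ (Pa.atom i ∩ Pb.atom j) with hpdef
    set t : Finset Pa.ι := 𝒜.filter p with htdef
    have hSt : S j = ∑ i ∈ t, μ (Pa.atom i ∩ Pb.atom j) := by
      rw [hSdef, htdef]
      exact (Finset.sum_filter_of_ne fun i _ hne =>
        pos_iff_ne_zero.2 hne).symm
    have hcard : (t.card : ℝ≥0∞) ≤ rCard μ Pa Pb j := by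
      have h1 : (t.card : ℝ≥0∞) = ∑ _x ∈ t.subtype p, (1:ℝ≥0∞) := by
        rw [Finset.sum_const, nsmul_eq_mul, mul_one, Finset.card_subtype, htdef]
        simp [Finset.filter_filter]
      rw [h1, rCard]
      exact ENNReal.sum_le_tsum _
    calc S j ^ 2 = (∑ i ∈ t, μ (Pa.atom i ∩ Pb.atom j)) ^ 2 := by rw [hSt]
      _ ≤ (t.card : ℝ≥0∞) * ∑ i ∈ t, μ (Pa.atom i ∩ Pb.atom j) ^ 2 := ennreal_sq_sum_le t _
      _ ≤ rCard μ Pa Pb j * ∑ i ∈ 𝒜, μ (Pa.atom i ∩ Pb.atom j) ^ 2 := by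
          refine mul_le_mul' hcard (Finset.sum_le_sum_of_subset ?_)
          exact Finset.filter_subset _ _
  -- bound on ∑ v²
  have hv2 : ∑' j, v j ^ 2 ≤ ENNReal.ofReal c * μ (⋃ i ∈ 𝒜, Pa.atom i) := by
    have hvj : ∀ j, v j ^ 2 = S j ^ 2 / μ (Pb.atom j) := by
      intro j
      rw [hvdef]
      simp only []
      rw [div_eq_mul_inv, mul_pow, ← ENNReal.inv_pow, hsqrt j, ← div_eq_mul_inv]
    have hmain : ∀ i ∈ 𝒜,
        ∑' j, rCard μ Pa Pb j * μ (Pa.atom i ∩ Pb.atom j) ^ 2 / μ (Pb.atom j)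
          = μ (Pa.atom i) * atomSum μ Pa Pb i := by
      intro i _
      rw [atomSum, ← ENNReal.tsum_mul_left]
      refine tsum_congr fun j => ?_
      refine Eq.symm ?_
      rw [div_eq_mul_inv, div_eq_mul_inv,
        ENNReal.mul_inv (Or.inl (Pa.pos i).ne') (Or.inl (Pa.lt_top i).ne)]
      calc μ (Pa.atom i) * (rCard μ Pa Pb j * μ (Pa.atom i ∩ Pb.atom j) ^ 2 *
            ((μ (Pa.atom i))⁻¹ * (μ (Pb.atom j))⁻¹))
          = (μ (Pa.atom i) * (μ (Pa.atom i))⁻¹) *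
            (rCard μ Pa Pb j * μ (Pa.atom i ∩ Pb.atom j) ^ 2 * (μ (Pb.atom j))⁻¹) := by
            ring
        _ = rCard μ Pa Pb j * μ (Pa.atom i ∩ Pb.atom j) ^ 2 * (μ (Pb.atom j))⁻¹ := by
            rw [ENNReal.mul_inv_cancel (Pa.pos i).ne' (Pa.lt_top i).ne, one_mul]
    calc ∑' j, v j ^ 2
        ≤ ∑' j, (rCard μ Pa Pb j * ∑ i ∈ 𝒜, μ (Pa.atom i ∩ Pb.atom j) ^ 2) / μ (Pb.atom j) := by
          refine ENNReal.tsum_le_tsum fun j => ?_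
          rw [hvj j]
          exact ENNReal.div_le_div_right (hinner j) _
      _ = ∑' j, ∑ i ∈ 𝒜, rCard μ Pa Pb j * μ (Pa.atom i ∩ Pb.atom j) ^ 2 / μ (Pb.atom j) := by
          refine tsum_congr fun j => ?_
          simp [div_eq_mul_inv, Finset.mul_sum, Finset.sum_mul]
      _ = ∑ i ∈ 𝒜, ∑' j, rCard μ Pa Pb j * μ (Pa.atom i ∩ Pb.atom j) ^ 2 / μ (Pb.atom j) :=
          Summable.tsum_finsetSum (fun i _ => ENNReal.summable)
      _ = ∑ i ∈ 𝒜, μ (Pa.atom i) * atomSum μ Pa Pb i := Finset.sum_congr rfl hmain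
      _ ≤ ∑ i ∈ 𝒜, μ (Pa.atom i) * ENNReal.ofReal c :=
          Finset.sum_le_sum fun i hi => mul_le_mul_right (H i (h𝒜 i hi)) _
      _ = ENNReal.ofReal c * μ (⋃ i ∈ 𝒜, Pa.atom i) := by
          rw [← Finset.sum_mul, hμE, mul_comm]
  -- combine
  have key := ennreal_cs w v
  rw [tsum_congr hwv, ← hES, hw2, ← hμR] at key
  have key2 : μ (⋃ i ∈ 𝒜, Pa.atom i) * μ (⋃ i ∈ 𝒜, Pa.atom i)
      ≤ (ENNReal.ofReal c * μ (⋃ j ∈ R, Pb.atom j)) * μ (⋃ i ∈ 𝒜, Pa.atom i) := by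
    calc μ (⋃ i ∈ 𝒜, Pa.atom i) * μ (⋃ i ∈ 𝒜, Pa.atom i) = μ (⋃ i ∈ 𝒜, Pa.atom i) ^ 2 := (sq _).symm
      _ ≤ μ (⋃ j ∈ R, Pb.atom j) * ∑' j, v j ^ 2 := key
      _ ≤ μ (⋃ j ∈ R, Pb.atom j) * (ENNReal.ofReal c * μ (⋃ i ∈ 𝒜, Pa.atom i)) :=
          mul_le_mul_right hv2 _
      _ = (ENNReal.ofReal c * μ (⋃ j ∈ R, Pb.atom j)) * μ (⋃ i ∈ 𝒜, Pa.atom i) := by ring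
  rw [hset]
  exact (ENNReal.mul_le_mul_iff_left hE0 hElt).1 key2
end

section
/- Let α > 0, n ≥ 1, N ≥ 1 an integer, let R ⊆ ℝ^n and S ⊆ ℝ^n be measurable sets, and let a ∈ ℝ^n. Assume S ⊆ ⋃_{j=1}^N (R + j·a) and |x + j·a| ≥ |x| + |a|/2 for every x ∈ R and every j ∈ {1,…,N}. Then ∫_S e^{−|x|^α} dx ≤ N·( sup_{x∈R} e^{|x|^α − (|x| + |a|/2)^α} )·∫_R e^{−|x|^α} dx. -/
open MeasureTheory ENNReal

/-- translation-covering estimate for `e^{-|x|^α}dx`.  If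
`S ⊆ ⋃_{j=1}^N (R + j·a)` and `|x + j·a| ≥ |x| + |a|/2` for all `x ∈ R`, `1 ≤ j ≤ N`, then
`∫_S e^{-|x|^α} dx ≤ N · (sup_{x∈R} e^{|x|^α - (|x|+|a|/2)^α}) · ∫_R e^{-|x|^α} dx`. -/
theorem statement19 (α : ℝ) (hα : 0 < α) (n : ℕ) (hn : 1 ≤ n) (N : ℕ) (hN : 1 ≤ N)
    (R S : Set (EuclideanSpace ℝ (Fin n))) (hR : MeasurableSet R) (hS : MeasurableSet S)
    (a : EuclideanSpace ℝ (Fin n))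
    (hcov : S ⊆ ⋃ j ∈ Finset.Icc 1 N, (fun x => x + (j : ℝ) • a) '' R)
    (hfar : ∀ x ∈ R, ∀ j ∈ Finset.Icc 1 N, ‖x‖ + ‖a‖ / 2 ≤ ‖x + (j : ℝ) • a‖) :
    ∫⁻ x in S, ENNReal.ofReal (Real.exp (-(‖x‖ ^ α))) ∂volume
      ≤ (N : ℝ≥0∞) *
          (⨆ x ∈ R, ENNReal.ofReal (Real.exp (‖x‖ ^ α - (‖x‖ + ‖a‖ / 2) ^ α))) *
          ∫⁻ x in R, ENNReal.ofReal (Real.exp (-(‖x‖ ^ α))) ∂volume := by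
  set f : EuclideanSpace ℝ (Fin n) → ℝ≥0∞ :=
    fun x => ENNReal.ofReal (Real.exp (-(‖x‖ ^ α))) with hf
  set M : ℝ≥0∞ := ⨆ x ∈ R, ENNReal.ofReal (Real.exp (‖x‖ ^ α - (‖x‖ + ‖a‖ / 2) ^ α)) with hM
  have key : ∀ j ∈ Finset.Icc 1 N,
      ∫⁻ x in (fun x => x + (j : ℝ) • a) '' R, f x ∂volume
        ≤ M * ∫⁻ x in R, f x ∂volume := by
    intro j hj
    have hmp : MeasurePreserving (fun x => x + (j : ℝ) • a)
        (volume : Measure (EuclideanSpace ℝ (Fin n))) volume :=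
      measurePreserving_add_right volume _
    have hemb : MeasurableEmbedding (fun x : EuclideanSpace ℝ (Fin n) => x + (j : ℝ) • a) :=
      (MeasurableEquiv.addRight ((j : ℝ) • a)).measurableEmbedding
    rw [← hmp.setLIntegral_comp_emb hemb f R]
    have hbd : ∀ x ∈ R, f (x + (j : ℝ) • a) ≤ M * f x := by
      intro x hx
      have h1 : ‖x‖ + ‖a‖ / 2 ≤ ‖x + (j : ℝ) • a‖ := hfar x hx j hj
      have h2 : (‖x‖ + ‖a‖ / 2) ^ α ≤ ‖x + (j : ℝ) • a‖ ^ α :=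
        Real.rpow_le_rpow (by positivity) h1 hα.le
      have h3 : Real.exp (-(‖x + (j : ℝ) • a‖ ^ α))
          ≤ Real.exp (‖x‖ ^ α - (‖x‖ + ‖a‖ / 2) ^ α) * Real.exp (-(‖x‖ ^ α)) := by
        rw [← Real.exp_add]
        exact Real.exp_le_exp.mpr (by linarith)
      calc f (x + (j : ℝ) • a) ≤ ENNReal.ofReal
            (Real.exp (‖x‖ ^ α - (‖x‖ + ‖a‖ / 2) ^ α) * Real.exp (-(‖x‖ ^ α))) :=
            ENNReal.ofReal_le_ofReal h3
        _ = ENNReal.ofReal (Real.exp (‖x‖ ^ α - (‖x‖ + ‖a‖ / 2) ^ α)) * f x := by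
            rw [ENNReal.ofReal_mul (Real.exp_nonneg _)]
        _ ≤ M * f x := by
            gcongr
            exact le_iSup₂ (f := fun x (_ : x ∈ R) =>
              ENNReal.ofReal (Real.exp (‖x‖ ^ α - (‖x‖ + ‖a‖ / 2) ^ α))) x hx
    calc ∫⁻ x in R, f (x + (j : ℝ) • a) ∂volume
        ≤ ∫⁻ x in R, M * f x ∂volume := setLIntegral_mono' hR hbd
      _ = M * ∫⁻ x in R, f x ∂volume := by
          apply lintegral_const_mul
          fun_prop
  calc ∫⁻ x in S, f x ∂volume
      ≤ ∫⁻ x in ⋃ j ∈ Finset.Icc 1 N, (fun x => x + (j : ℝ) • a) '' R, f x ∂volume :=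
        lintegral_mono_set hcov
    _ ≤ ∑ j ∈ Finset.Icc 1 N, ∫⁻ x in (fun x => x + (j : ℝ) • a) '' R, f x ∂volume := by
        have hfm : Measurable f := by fun_prop
        have himg : ∀ j : ℕ, MeasurableSet ((fun x => x + (j : ℝ) • a) '' R) := fun j =>
          ((MeasurableEquiv.addRight ((j : ℝ) • a)).measurableEmbedding).measurableSet_image.mpr hR
        have h1 : ∫⁻ x in ⋃ j ∈ Finset.Icc 1 N, (fun x => x + (j : ℝ) • a) '' R, f x ∂volume
            = (volume.withDensity f) (⋃ j ∈ Finset.Icc 1 N, (fun x => x + (j : ℝ) • a) '' R) :=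
          (withDensity_apply f (Finset.measurableSet_biUnion _ fun j _ => himg j)).symm
        rw [h1]
        refine le_trans (measure_biUnion_finset_le _ _) (Finset.sum_le_sum fun j _ => ?_)
        rw [withDensity_apply f (himg j)]
    _ ≤ ∑ j ∈ Finset.Icc 1 N, M * ∫⁻ x in R, f x ∂volume := Finset.sum_le_sum key
    _ = (N : ℝ≥0∞) * M * ∫⁻ x in R, f x ∂volume := by
        rw [Finset.sum_const, Nat.card_Icc]
        simp [mul_assoc, nsmul_eq_mul]
end
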